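/- Let p be a prime number and let A be a perfect commutative ring of characteristic p (i.e. the Frobenius x ↦ x^p is bijective on A). Let ϖ ∈ A be a non-zero-divisor such that ⋂_{n ≥ 0} ϖⁿ·A = 0. Then for every Witt vector α ∈ W(A), the element ξ = p + [ϖ]·α is a non-zero-divisor in the ring W(A) of p-typical Witt vectors of A. -/

import Mathlib

universe u

open WittVector

/-- Let `p` be a prime and `A` a perfect commutative ring of characteristic `p`. Let `ϖ ∈ A`
be a non-zero-divisor with `⋂ₙ ϖⁿ·A = 0`. Then for every Witt vector `α ∈ W(A)`, the element
`ξ = p + [ϖ]·α` is a non-zero-divisor in the ring of `p`-typical Witt vectors `W(A)`. -/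
theorem wittVector_p_add_teichmuller_mul_mem_nonZeroDivisors
    (p : ℕ) [Fact p.Prime] (A : Type u) [CommRing A] [CharP A p]
    (hperf : Function.Bijective fun a : A => a ^ p)
    (ϖ : A) (hϖ : ϖ ∈ nonZeroDivisors A)
    (hsep : (⨅ n : ℕ, Ideal.span {ϖ ^ n}) = (⊥ : Ideal A))
    (α : WittVector p A) :
    (p : WittVector p A) + WittVector.teichmuller p ϖ * α ∈
      nonZeroDivisors (WittVector p A) := by
  classical
  haveI : ExpChar A p := .prime Fact.out
  haveI : PerfectRing A p := by
    constructor
    have h : ⇑(_root_.frobenius A p) = fun a : A => a ^ p := funext fun a => frobenius_def p a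
    exact hperf
  set ξ : WittVector p A := (p : WittVector p A) + WittVector.teichmuller p ϖ * α with hξ
  -- Verschiebung is injective
  have Vinj : ∀ a b : WittVector p A,
      WittVector.verschiebung a = WittVector.verschiebung b → a = b := by
    intro a b h
    ext n
    have := congrArg (fun v => WittVector.coeff v (n + 1)) h
    simpa [WittVector.verschiebung_coeff_succ] using this
  -- Witt vectors with zero constant coefficient are in the image of Verschiebung
  have hVz : ∀ y : WittVector p A, y.coeff 0 = 0 →
      ∃ z, y = WittVector.verschiebung z := by
    intro y h0
    refine ⟨WittVector.mk p fun n => y.coeff (n + 1), ?_⟩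
    ext n
    cases n with
    | zero => simpa [WittVector.verschiebung_coeff_zero] using h0
    | succ n => simp [WittVector.verschiebung_coeff_succ, WittVector.coeff_mk]
  -- Frobenius of a Teichmüller lift
  have Fteich : ∀ a : A, WittVector.frobenius (WittVector.teichmuller p a)
      = WittVector.teichmuller p (a ^ p) := by
    intro a
    ext n
    cases n with
    | zero =>
      rw [WittVector.coeff_frobenius_charP, WittVector.teichmuller_coeff_zero,
        WittVector.teichmuller_coeff_zero]
    | succ n =>
      rw [WittVector.coeff_frobenius_charP,
        WittVector.teichmuller_coeff_pos p _ _ (Nat.succ_pos n),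
        WittVector.teichmuller_coeff_pos p _ _ (Nat.succ_pos n),
        zero_pow (Fact.out : p.Prime).ne_zero]
  -- the Teichmüller lift of a non-zero-divisor is a non-zero-divisor (coefficientwise)
  have teichC : ∀ (n : ℕ) (a : A), a ∈ nonZeroDivisors A → ∀ u : WittVector p A,
      WittVector.teichmuller p a * u = 0 → u.coeff n = 0 := by
    intro n
    induction n with
    | zero =>
      intro a ha u hu
      have h0 := congrArg (fun v => WittVector.coeff v 0) hu
      simp only [WittVector.mul_coeff_zero, WittVector.teichmuller_coeff_zero,
        WittVector.zero_coeff] at h0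
      exact mem_nonZeroDivisors_iff_right.mp ha _ (by rwa [mul_comm] at h0)
    | succ n ih =>
      intro a ha u hu
      have h0 : u.coeff 0 = 0 := by
        have h0 := congrArg (fun v => WittVector.coeff v 0) hu
        simp only [WittVector.mul_coeff_zero, WittVector.teichmuller_coeff_zero,
          WittVector.zero_coeff] at h0
        exact mem_nonZeroDivisors_iff_right.mp ha _ (by rwa [mul_comm] at h0)
      obtain ⟨z, rfl⟩ := hVz u h0
      have key : WittVector.verschiebung (z * WittVector.teichmuller p (a ^ p)) = 0 := by
        rw [← Fteich, WittVector.verschiebung_mul_frobenius, mul_comm]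
        exact hu
      have hz : z * WittVector.teichmuller p (a ^ p) = 0 := by
        apply Vinj
        simpa using key
      rw [WittVector.verschiebung_coeff_succ]
      exact ih (a ^ p) (pow_mem ha p) z (by rwa [mul_comm] at hz)
  -- coefficient membership lemma
  have coeffmem : ∀ (n : ℕ) (b : A) (y : WittVector p A),
      (WittVector.teichmuller p (b ^ p ^ n) * y).coeff n ∈ Ideal.span {b} := by
    intro n
    induction n with
    | zero =>
      intro b y
      rw [WittVector.mul_coeff_zero, WittVector.teichmuller_coeff_zero, pow_zero, pow_one]
      exact Ideal.mul_mem_right _ _ (Ideal.mem_span_singleton_self b)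
    | succ n ih =>
      intro b y
      set c : A := y.coeff 0 with hc
      obtain ⟨z, hz⟩ := hVz (y - WittVector.teichmuller p c)
        (by
          have h := (WittVector.constantCoeff (p := p) (R := A)).map_sub y
            (WittVector.teichmuller p c)
          simpa [WittVector.teichmuller_coeff_zero, ← hc] using h)
      have hy : y = WittVector.teichmuller p c + WittVector.verschiebung z := by
        rw [← hz]; ring
      have hsplit : WittVector.teichmuller p (b ^ p ^ (n + 1)) * y
          = WittVector.teichmuller p (b ^ p ^ (n + 1) * c)
            + WittVector.verschiebung
                (z * WittVector.teichmuller p ((b ^ p ^ (n + 1)) ^ p)) := by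
        rw [← Fteich, WittVector.verschiebung_mul_frobenius]
        rw [hy, mul_add, ← MonoidHom.map_mul]
        ring
      rw [hsplit, WittVector.coeff_add_of_disjoint]
      · rw [WittVector.teichmuller_coeff_pos p _ _ (Nat.succ_pos n),
          WittVector.verschiebung_coeff_succ, zero_add]
        have hpow : (b ^ p ^ (n + 1)) ^ p = (b ^ p ^ 2) ^ p ^ n := by
          rw [← pow_mul, ← pow_mul]
          congr 1
          rw [← pow_succ, ← pow_add]
          congr 1
          omega
        rw [hpow, mul_comm]
        refine Ideal.span_singleton_le_span_singleton.mpr ?_ (ih (b ^ p ^ 2) z)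
        exact dvd_pow_self b (by simpa using pow_ne_zero 2 (Fact.out : p.Prime).ne_zero)
      · intro m
        cases m with
        | zero => exact Or.inr (WittVector.verschiebung_coeff_zero _)
        | succ m => exact Or.inl (WittVector.teichmuller_coeff_pos p _ _ (Nat.succ_pos m))
  -- the key step: a solution of `ξ x = 0` is divisible by `[ϖ]`
  have step : ∀ x : WittVector p A, ξ * x = 0 →
      ∃ w, ξ * w = 0 ∧ x = WittVector.teichmuller p ϖ * w := by
    intro x hx
    have hx' : WittVector.verschiebung (WittVector.frobenius x)
        + WittVector.teichmuller p ϖ * (α * x) = 0 := by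
      rw [WittVector.verschiebung_frobenius]
      rw [hξ] at hx
      rw [← hx]; ring
    have h0 : (α * x).coeff 0 = 0 := by
      have h0 := congrArg (fun v => WittVector.coeff v 0) hx'
      simp only [WittVector.add_coeff_zero, WittVector.verschiebung_coeff_zero,
        WittVector.mul_coeff_zero, WittVector.teichmuller_coeff_zero, WittVector.zero_coeff,
        zero_add] at h0
      rw [WittVector.mul_coeff_zero]
      exact mem_nonZeroDivisors_iff_right.mp hϖ _ (by rwa [mul_comm] at h0)
    obtain ⟨z, hz⟩ := hVz (α * x) h0
    have hmul : WittVector.teichmuller p ϖ * WittVector.verschiebung z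
        = WittVector.verschiebung (z * WittVector.teichmuller p (ϖ ^ p)) := by
      rw [← Fteich, WittVector.verschiebung_mul_frobenius, mul_comm]
    have hsum : WittVector.verschiebung
        (WittVector.frobenius x + z * WittVector.teichmuller p (ϖ ^ p)) = 0 := by
      rw [map_add, ← hmul, ← hz]
      exact hx'
    have hF : WittVector.frobenius x = -(z * WittVector.teichmuller p (ϖ ^ p)) := by
      have h := Vinj _ 0 (by rw [hsum, map_zero])
      linear_combination h
    obtain ⟨u, hu⟩ := (WittVector.frobenius_bijective p A).2 (-z)
    have hxu : x = WittVector.teichmuller p ϖ * u := by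
      apply (WittVector.frobenius_bijective p A).1
      rw [map_mul, Fteich, hu, hF]
      ring
    refine ⟨u, ?_, hxu⟩
    have h2 : WittVector.teichmuller p ϖ * (ξ * u) = 0 := by
      rw [show WittVector.teichmuller p ϖ * (ξ * u) = ξ * x by rw [hxu]; ring]
      exact hx
    ext n
    rw [WittVector.zero_coeff]
    exact teichC n ϖ hϖ _ h2
  -- iterate the key step
  have iter : ∀ (k : ℕ) (x : WittVector p A), ξ * x = 0 →
      ∃ w, ξ * w = 0 ∧ x = WittVector.teichmuller p (ϖ ^ k) * w := by
    intro k
    induction k with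
    | zero => intro x hx; exact ⟨x, hx, by simp⟩
    | succ k ih =>
      intro x hx
      obtain ⟨w, hw, rfl⟩ := step x hx
      obtain ⟨w', hw', rfl⟩ := ih w hw
      refine ⟨w', hw', ?_⟩
      rw [← mul_assoc, ← MonoidHom.map_mul, ← pow_succ']
  -- conclude
  rw [mem_nonZeroDivisors_iff_right]
  intro x hx
  have hx' : ξ * x = 0 := by rwa [mul_comm] at hx
  ext n
  rw [WittVector.zero_coeff]
  have hmem : x.coeff n ∈ (⊥ : Ideal A) := by
    rw [← hsep, Ideal.mem_iInf]
    intro m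
    obtain ⟨w, -, hw⟩ := iter (m * p ^ n) x hx'
    rw [hw, pow_mul]
    exact coeffmem n (ϖ ^ m) w
  simpa using hmem
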